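/- Let 0 < ε ≤ 1/20, ε' = ε - ε/(3log(1/ε)), C = ε'^{-12/ε'}, M = ⌊(1-ε')·log(C)/(1+log 2)⌋, D = (2e)^{(1+ε)M}, and η = ε^{15/ε}. Then C + 1 ≤ D < η^{-1}. -/

import Mathlib

open Real

set_option maxHeartbeats 1000000 in
theorem stmt_18 (ε : ℝ) (h0 : 0 < ε) (h1 : ε ≤ 1/20)
    (ε' C η D : ℝ) (M : ℤ)
    (hε' : ε' = ε - ε/(3*Real.log (1/ε)))
    (hC : C = ε' ^ (-(12/ε')))
    (hM : M = ⌊(1-ε') * Real.log C / (1 + Real.log 2)⌋)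
    (hD : D = (2*Real.exp 1) ^ ((1+ε) * (M:ℝ)))
    (hη : η = ε ^ (15/ε)) :
    C + 1 ≤ D ∧ D < η⁻¹ := by
  have hε20 : (20:ℝ) ≤ 1/ε := by
    rw [le_div_iff₀ h0]; linarith only [h1, h0]
  obtain ⟨L, hLdef⟩ : ∃ y, y = Real.log (1/ε) := ⟨_, rfl⟩
  rw [← hLdef] at hε'
  obtain ⟨t, htdef⟩ : ∃ y, y = Real.log 2 := ⟨_, rfl⟩
  have hlog2u : t < 0.6931471808 := htdef ▸ Real.log_two_lt_d9
  have hlog2l : (0.6931471803:ℝ) < t := htdef ▸ Real.log_two_gt_d9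
  -- L ≥ 2.772
  have hL16 : Real.log 16 ≤ L := hLdef ▸ Real.log_le_log (by norm_num) (by linarith only [hε20])
  have h16 : Real.log 16 = 4 * t := by
    have h : (16:ℝ) = 2^(4:ℕ) := by norm_num
    rw [h, Real.log_pow, ← htdef]; norm_num
  have hL : (2.772:ℝ) ≤ L := by rw [h16] at hL16; linarith only [hL16, hlog2l]
  have hLpos : (0:ℝ) < L := by linarith only [hL]
  -- log 20 ≤ 3
  have hexp3 : (20:ℝ) ≤ Real.exp 3 := by
    have h3 : Real.exp 1 ^ (3:ℕ) = Real.exp 3 := by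
      rw [← Real.exp_nat_mul]; norm_num
    have h4 : (2.7182818283:ℝ)^(3:ℕ) ≤ Real.exp 1 ^ (3:ℕ) :=
      pow_le_pow_left₀ (by norm_num) (le_of_lt Real.exp_one_gt_d9) 3
    have h5 : (20:ℝ) ≤ (2.7182818283:ℝ)^(3:ℕ) := by norm_num
    linarith only [h3, h4, h5]
  have hlog20 : Real.log 20 ≤ 3 := by
    calc Real.log 20 ≤ Real.log (Real.exp 3) := Real.log_le_log (by norm_num) hexp3
    _ = 3 := Real.log_exp 3
  -- ε * L ≤ 0.15
  have hεL : ε * L ≤ 0.15 := by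
    have hsplit : L = Real.log 20 + Real.log (1/(20*ε)) := by
      rw [← Real.log_mul (by norm_num) (by positivity), hLdef]
      congr 1
      field_simp
    have hb : Real.log (1/(20*ε)) ≤ 1/(20*ε) - 1 :=
      Real.log_le_sub_one_of_pos (by positivity)
    have h20 : (1:ℝ) ≤ Real.log 20 := by
      have h := Real.log_le_log (show (0:ℝ) < 16 by norm_num) (show (16:ℝ) ≤ 20 by norm_num)
      rw [h16] at h; linarith only [h, hlog2l]
    have hm : ε * L ≤ ε * Real.log 20 + ε * (1/(20*ε) - 1) := by
      rw [hsplit]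
      have := mul_le_mul_of_nonneg_left hb h0.le
      linarith only [this]
    have hc : ε * (1/(20*ε)) = 1/20 := by field_simp
    have hm2 : ε * Real.log 20 ≤ 3 * ε := by
      nlinarith only [hlog20, h0, h20]
    nlinarith only [hm, hc, hm2, h0, h1, h20, hlog20]
  -- basic ε' facts
  have hd : ε - ε' = ε/(3*L) := by rw [hε']; ring
  have hdpos : 0 < ε - ε' := by rw [hd]; positivity
  have hdle : ε - ε' ≤ 0.1203 * ε := by
    rw [hd, div_le_iff₀ (by positivity)]
    nlinarith only [hL, h0]
  have hε'pos : 0 < ε' := by nlinarith only [hdle, h0]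
  have hε'ge : 0.8797 * ε ≤ ε' := by linarith only [hdle]
  have hε'lt : ε' < ε := by linarith only [hdpos]
  have hε'le : ε' ≤ 1/20 := by linarith only [hε'lt, h1]
  -- b := log(ε/ε') ∈ [0, 0.137]
  obtain ⟨b, hbdef⟩ : ∃ y, y = Real.log ε - Real.log ε' := ⟨_, rfl⟩
  have hb0 : 0 ≤ b := by
    have := Real.log_le_log hε'pos (le_of_lt hε'lt)
    rw [hbdef]; linarith only [this]
  have hbu : b ≤ 0.137 := by
    have h1' : Real.log (ε/ε') ≤ ε/ε' - 1 := Real.log_le_sub_one_of_pos (by positivity)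
    have h2' : Real.log (ε/ε') = b := by
      rw [Real.log_div (ne_of_gt h0) (ne_of_gt hε'pos), hbdef]
    have h3' : ε/ε' - 1 = (ε - ε')/ε' := by field_simp
    have h4' : (ε - ε')/ε' ≤ 0.137 := by
      rw [div_le_iff₀ hε'pos]; nlinarith only [hdle, hε'ge, h0]
    linarith only [h1', h2', h3', h4']
  -- A := -log ε' = L + b
  have hLinv : L = -Real.log ε := by rw [hLdef, one_div, Real.log_inv]
  have hA : -Real.log ε' = L + b := by rw [hbdef, hLinv]; ring
  -- log C
  obtain ⟨lc, hlcdef⟩ : ∃ y, y = Real.log C := ⟨_, rfl⟩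
  rw [← hlcdef, ← htdef] at hM
  have hlc : ε' * lc = 12 * (L + b) := by
    have h1' : lc = -(12/ε') * Real.log ε' := by rw [hlcdef, hC, Real.log_rpow hε'pos]
    have h2' : ε' * ((12/ε') * Real.log ε') = 12 * Real.log ε' := by
      field_simp
    calc ε' * lc = -(ε' * ((12/ε') * Real.log ε')) := by rw [h1']; ring
      _ = -(12 * Real.log ε') := by rw [h2']
      _ = 12 * (L + b) := by linarith only [hA]
  have hCpos : 0 < C := by rw [hC]; exact Real.rpow_pos_of_pos hε'pos _
  have hlcpos : 0 < lc := by nlinarith only [hlc, hε'pos, hLpos, hb0]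
  have hεlc : 12 * L ≤ ε * lc := by nlinarith only [hlc, hε'lt, hlcpos, hb0]
  have hlc665 : 665 ≤ lc := by nlinarith only [hεlc, hL, h1, h0, hlcpos]
  have hC100 : (100:ℝ) ≤ C := by
    have h := Real.add_one_le_exp lc
    have h2 : Real.exp lc = C := by rw [hlcdef, Real.exp_log hCpos]
    linarith only [h, h2, hlc665]
  -- log D
  have hDexp : D = Real.exp ((t + 1) * ((1+ε) * (M:ℝ))) := by
    rw [hD, Real.rpow_def_of_pos (by positivity),
      Real.log_mul (by norm_num) (Real.exp_ne_zero 1), Real.log_exp, ← htdef]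
  -- floor bounds
  obtain ⟨x, hxdef⟩ : ∃ y, y = (1-ε') * lc / (1 + t) := ⟨_, rfl⟩
  have htpos : (0:ℝ) < 1 + t := by linarith only [hlog2l]
  have hMx : (M:ℝ) ≤ x := by rw [hM, hxdef]; exact_mod_cast Int.floor_le _
  have hxM : x - 1 < (M:ℝ) := by rw [hM, hxdef]; exact_mod_cast Int.sub_one_lt_floor _
  have hxe : (1 + t) * x = (1-ε') * lc := by
    rw [hxdef]; field_simp
  -- key product bounds
  have h3L : (ε - ε') * (3*L) = ε := by
    rw [hd]; field_simp
  have h4le : (4:ℝ) ≤ (ε - ε') * lc := by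
    have h6 : (ε - ε') * (3*L) * lc = ε * lc := by rw [h3L]
    nlinarith only [h6, hεlc, hLpos]
  have hmul : ε * ε' * lc = 12 * ε * (L + b) := by rw [mul_assoc, hlc]; ring
  have h5le : ε * ε' * lc ≤ 1.8822 := by
    rw [hmul]; nlinarith only [hεL, hbu, hb0, h1, h0]
  have hxe2 : ε * ((1 + t) * x) = ε * ((1-ε') * lc) := by rw [hxe]
  have hqnn : (0:ℝ) ≤ (1+ε) * (1+t) := by nlinarith only [htpos, h0]
  constructor
  · -- C + 1 ≤ D
    have key : lc + 0.01 ≤ (t + 1) * ((1+ε) * (M:ℝ)) := by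
      have hprod : (1+ε) * (1+t) * (x - 1) ≤ (1+ε) * (1+t) * (M:ℝ) :=
        mul_le_mul_of_nonneg_left hxM.le hqnn
      have hlb : (1+ε) * ((1-ε') * lc - (1+t)) ≤ (t + 1) * ((1+ε) * (M:ℝ)) := by
        linarith only [hprod, hxe, hxe2]
      have hlt : (1+ε) * (1+t) ≤ 1.05 * 1.6932 := by
        have := mul_le_mul (show (1+ε:ℝ) ≤ 1.05 by linarith only [h1])
          (show (1+t:ℝ) ≤ 1.6932 by linarith only [hlog2u]) (by linarith only [hlog2l]) (by norm_num)
        linarith only [this]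
      have main : lc + 0.01 ≤ (1+ε) * ((1-ε') * lc - (1+t)) := by
        linarith only [h4le, h5le, hlt]
      linarith only [hlb, main]
    have he : (1.01:ℝ) ≤ Real.exp 0.01 := by linarith only [Real.add_one_le_exp (0.01:ℝ)]
    calc C + 1 ≤ C * Real.exp 0.01 := by
          have h1' : C + 1 ≤ C * 1.01 := by linarith only [hC100]
          have h2' : C * 1.01 ≤ C * Real.exp 0.01 :=
            mul_le_mul_of_nonneg_left he hCpos.le
          linarith only [h1', h2']
      _ = Real.exp (lc + 0.01) := by
          rw [Real.exp_add, hlcdef, Real.exp_log hCpos]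
      _ ≤ Real.exp ((t + 1) * ((1+ε) * (M:ℝ))) := Real.exp_le_exp.mpr key
      _ = D := hDexp.symm
  · -- D < η⁻¹
    have hηinv : η⁻¹ = Real.exp ((15/ε) * L) := by
      rw [hη, Real.rpow_def_of_pos h0, ← Real.exp_neg]
      congr 1
      have h : Real.log ε = -L := by rw [hLinv]; ring
      rw [h]; ring
    have hεlc_up : ε * lc ≤ 13.642 * L + 1.869 := by
      have hmm : 0.8797 * (ε * lc) ≤ ε' * lc := by
        have := mul_le_mul_of_nonneg_right hε'ge hlcpos.le
        linarith only [this]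
      have hup2 : ε' * lc ≤ 12 * (L + 0.137) := by linarith only [hlc, hbu]
      nlinarith only [hmm, hup2, hLpos]
    have key2 : (t + 1) * ((1+ε) * (M:ℝ)) < (15/ε) * L := by
      have hprod : (1+ε) * (1+t) * (M:ℝ) ≤ (1+ε) * (1+t) * x :=
        mul_le_mul_of_nonneg_left hMx hqnn
      have hup : (t + 1) * ((1+ε) * (M:ℝ)) ≤ (1+ε) * ((1-ε') * lc) := by
        linarith only [hprod, hxe, hxe2]
      have hcoef : (1+ε) * (1-ε') ≤ 1.00602 := by
        nlinarith only [hdle, mul_nonneg h0.le hε'pos.le, h1]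
      have hcu : (1+ε) * (1-ε') * (ε * lc) ≤ 1.00602 * (ε * lc) :=
        mul_le_mul_of_nonneg_right hcoef (by positivity)
      have main2 : ε * ((1+ε) * ((1-ε') * lc)) < 15 * L := by
        nlinarith only [hcu, hεlc_up, hL]
      have hfin : (1+ε) * ((1-ε') * lc) < (15/ε) * L := by
        rw [div_mul_eq_mul_div, lt_div_iff₀ h0]
        linarith only [main2]
      linarith only [hup, hfin]
    rw [hDexp, hηinv]
    exact Real.exp_lt_exp.mpr key2
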